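/- Let Ξ be a minimal and aperiodic right-infinite subshift over a finite alphabet with language ℒ. The cylinder sets [v] = { ξ ∈ Ξ : v is a prefix of ξ }, for v ∈ ℒ privileged, form a basis of clopen sets for the topology of Ξ. -/
import Mathlib


open scoped ENNReal Classical

noncomputable section

namespace Arx1111

variable {A : Type*}

/-! ### Words and infinite words -/

/-- The left shift on right-infinite words. -/
def shift (ξ : ℕ → A) : ℕ → A := fun n => ξ (n + 1)

/-- The finite word `u` occurs in the infinite word `ξ` at position `k`. -/
def FactorAt (u : List A) (ξ : ℕ → A) (k : ℕ) : Prop :=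
  u = (List.range u.length).map fun i => ξ (k + i)

/-- `u` is a factor of the infinite word `ξ`. -/
def IsFactorOf (u : List A) (ξ : ℕ → A) : Prop := ∃ k, FactorAt u ξ k

/-- `u` is a prefix of the infinite word `ξ`. -/
def PrefixOfInf (u : List A) (ξ : ℕ → A) : Prop := FactorAt u ξ 0

/-- `u` is a proper prefix of `v`. -/
def PPrefix (u v : List A) : Prop := u <+: v ∧ u ≠ v

/-- The `n`-th power `u^n` of a finite word `u`. -/
def wordPow (u : List A) : ℕ → List A
  | 0 => []
  | n + 1 => u ++ wordPow u n

/-- The language of a set of infinite words: all finite factors of its elements. -/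
def language (Ξ : Set (ℕ → A)) : Set (List A) := {u | ∃ ξ ∈ Ξ, IsFactorOf u ξ}

/-! ### Subshifts -/

/-- `Ξ` is a (right-infinite) subshift: nonempty, closed, shift-invariant. -/
structure IsSubshift [TopologicalSpace A] (Ξ : Set (ℕ → A)) : Prop where
  nonempty : Ξ.Nonempty
  isClosed : IsClosed Ξ
  shift_mem : ∀ ξ ∈ Ξ, shift ξ ∈ Ξ

/-- Minimality: every orbit is dense in `Ξ`. -/
def IsMinimal [TopologicalSpace A] (Ξ : Set (ℕ → A)) : Prop :=
  ∀ ξ ∈ Ξ, Ξ ⊆ closure (Set.range fun n => shift^[n] ξ)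

/-- Aperiodicity. -/
def Aperiodic (Ξ : Set (ℕ → A)) : Prop :=
  ∀ ξ ∈ Ξ, ∀ n : ℕ, shift^[n] ξ = ξ → n = 0

/-! ### Occurrences, complete first returns, privileged words -/

variable [DecidableEq A]

/-- The number of occurrences of `u` as a factor of `w`. -/
def occCount (u w : List A) : ℕ :=
  ((List.range (w.length + 1)).filter fun k => (w.drop k).take u.length == u).length

/-- `u'` is a complete first return to `u`: if `u` is empty, `u'` is a single letter;
otherwise `u` is a prefix and a suffix of `u'` and occurs exactly twice in `u'`. -/
def IsCFR (u u' : List A) : Prop :=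
  if u = [] then u'.length = 1
  else u <+: u' ∧ u <:+ u' ∧ occCount u u' = 2

/-- Privileged words of order `n`. -/
inductive PrivOrder : ℕ → List A → Prop where
  | zero : PrivOrder 0 []
  | succ {n : ℕ} {u u' : List A} : PrivOrder n u → IsCFR u u' → PrivOrder (n + 1) u'

/-- A word is privileged if it is privileged of some order. -/
def IsPrivileged (u : List A) : Prop := ∃ n, PrivOrder n u

/-- `u'` is a complete first return to `u` inside the language `L`. -/
def CFRin (L : Set (List A)) (u u' : List A) : Prop := u' ∈ L ∧ IsCFR u u'

/-- `u` is right-special for the language `L`. -/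
def RightSpecial (L : Set (List A)) (u : List A) : Prop :=
  u ∈ L ∧ ∃ a b : A, a ≠ b ∧ u ++ [a] ∈ L ∧ u ++ [b] ∈ L

/-- `a(v)`: number of one-letter right extensions of `v` in `L`, minus one. -/
def aext (L : Set (List A)) (v : List A) : ℕ := Nat.card {a : A // v ++ [a] ∈ L} - 1

/-- `ã(v)`: number of complete first returns to `v` in `L`, minus one, if `v` is
privileged, and `0` otherwise. -/
def atil (L : Set (List A)) (v : List A) : ℕ :=
  if IsPrivileged v then Nat.card {u' : List A // CFRin L v u'} - 1 else 0

/-- `S(u)`: right-special words `r` with `u ⪯ r ≺ u'` for some complete first return `u'`. -/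
def Sset (L : Set (List A)) (u : List A) : Set (List A) :=
  {r | RightSpecial L r ∧ ∃ u', CFRin L u u' ∧ u <+: r ∧ PPrefix r u'}

/-- Right-special balanced: between a privileged word and any of its complete first
returns there is exactly one right-special word. -/
def RSBalanced (L : Set (List A)) : Prop :=
  ∀ u, IsPrivileged u → u ∈ L → ∀ u', CFRin L u u' →
    ∃! r, RightSpecial L r ∧ u <+: r ∧ PPrefix r u'

/-- `r'` is the shortest right-special word having `r` as a proper prefix. -/
def IsShortestRSExt (L : Set (List A)) (r r' : List A) : Prop :=
  RightSpecial L r' ∧ PPrefix r r' ∧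
    ∀ r'', RightSpecial L r'' → PPrefix r r'' → r'.length ≤ r''.length

/-- `r = φ⁽⁰⁾(u)`: `r` is the shortest right-special word having `u` as a prefix. -/
def IsPhi0 (L : Set (List A)) (u r : List A) : Prop :=
  RightSpecial L r ∧ u <+: r ∧ ∀ r', RightSpecial L r' → u <+: r' → r.length ≤ r'.length

/-- `H⁽¹⁾`: pairs of distinct one-letter right extensions of a common word. -/
def H1 (L : Set (List A)) (v₁ v₂ : List A) : Prop :=
  v₁ ∈ L ∧ v₂ ∈ L ∧ v₁ ≠ v₂ ∧ ∃ (w : List A) (a b : A), v₁ = w ++ [a] ∧ v₂ = w ++ [b]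

/-- `H̃⁽¹⁾`: pairs of distinct complete first returns to a common privileged word. -/
def TildeH1 (L : Set (List A)) (u₁ u₂ : List A) : Prop :=
  u₁ ≠ u₂ ∧ ∃ u, IsPrivileged u ∧ CFRin L u u₁ ∧ CFRin L u u₂

/-- Length of the longest common prefix of two finite words. -/
def lcpLenW (u v : List A) : ℕ := sSup {n | n ≤ u.length ∧ u.take n = v.take n}

/-- Length of the longest common privileged prefix of two finite words. -/
def weeLenW (u v : List A) : ℕ :=
  sSup {n | ∃ w : List A, IsPrivileged w ∧ w.length = n ∧ w <+: u ∧ w <+: v}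

/-- `φ⁽¹⁾`: the pair of one-letter extensions of `u₁ ∧ u₂` which are prefixes of
`u₁` resp. `u₂`. -/
def phi1 (u₁ u₂ : List A) : List A × List A :=
  (u₁.take (lcpLenW u₁ u₂ + 1), u₂.take (lcpLenW u₁ u₂ + 1))

/-! ### Bounded powers and repulsiveness -/

/-- Bounded powers: there is `p` such that no `(p+1)`-th power of a nonempty word
belongs to `L`. -/
def BoundedPowers (L : Set (List A)) : Prop :=
  ∃ p : ℕ, ∀ u ∈ L, u ≠ [] → wordPow u (p + 1) ∉ L

/-- The set of ratios `(|W|-|w|)/|w|` over words `w, W ∈ L` with `w` a nonempty proper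
prefix and a suffix of `W`. -/
def repulsionSet (L : Set (List A)) : Set ℝ :=
  {x | ∃ w W : List A, w ∈ L ∧ W ∈ L ∧ w ≠ [] ∧ PPrefix w W ∧ w <:+ W ∧
        x = ((W.length : ℝ) - (w.length : ℝ)) / (w.length : ℝ)}

/-- The index of repulsiveness `ℓ`. -/
def repulsionIndex (L : Set (List A)) : ℝ := sInf (repulsionSet L)

/-- Repulsive: `ℓ > 0`. -/
def Repulsive (L : Set (List A)) : Prop := 0 < repulsionIndex L

/-! ### Privileged prefixes of infinite words -/

/-- The `n`-th privileged prefix `ξ̃ₙ` of an infinite word `ξ`. -/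
def privPrefix (ξ : ℕ → A) : ℕ → List A
  | 0 => []
  | n + 1 =>
    if h : ∃ u', IsCFR (privPrefix ξ n) u' ∧ PrefixOfInf u' ξ then h.choose
    else privPrefix ξ n

/-- The order `ind(ξ ⩏ η)` of the longest common privileged prefix of two infinite
words; the word `ξ ⩏ η` itself is `privPrefix ξ (weeInd ξ η)`. -/
def weeInd (ξ η : ℕ → A) : ℕ := sSup {n | privPrefix ξ n = privPrefix η n}

/-- Length of the longest common prefix `ξ ∧ η` of two distinct infinite words. -/
def lcpLenInf (ξ η : ℕ → A) : ℕ := sInf {n | ξ n ≠ η n}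

/-! ### Choice functions, weight functions and the metrics -/

/-- A choice function for `Ξ`. -/
def IsChoiceFun (Ξ : Set (ℕ → A)) (τ : List A → ℕ → A) : Prop :=
  (∀ v ∈ language Ξ, τ v ∈ Ξ ∧ PrefixOfInf v (τ v)) ∧
  (∀ v ∈ language Ξ, ∀ w ∈ language Ξ, v.length < w.length →
    PrefixOfInf w (τ v) → τ w = τ v)

/-- A weight function. -/
structure IsWeight (δ : ℕ → ℝ) : Prop where
  pos : ∀ n, 0 < δ n
  strictAnti : StrictAnti δ
  tendsto_zero : Filter.Tendsto δ Filter.atTop (nhds 0)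
  submul : ∃ c : ℝ, 0 < c ∧ ∀ a b : ℕ, δ (a * b) ≤ c * δ a * δ b
  doubling : ∃ c : ℝ, 0 < c ∧ ∀ a : ℕ, c * δ a ≤ δ (2 * a)

variable [TopologicalSpace A]

/-- The metric `d_τ` associated to the right-special horizontal edges. -/
def dTau (Ξ : Set (ℕ → A)) (δ : ℕ → ℝ) (τ : List A → ℕ → A) (ξ η : ℕ → A) : ℝ≥0∞ :=
  ⨆ f : {f : (ℕ → A) → ℝ // ContinuousOn f Ξ ∧
      ∀ v₁ v₂, H1 (language Ξ) v₁ v₂ → |f (τ v₁) - f (τ v₂)| ≤ δ (lcpLenW v₁ v₂)},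
    ENNReal.ofReal |f.1 ξ - f.1 η|

/-- The metric `d̃_τ` associated to the privileged horizontal edges. -/
def dTilTau (Ξ : Set (ℕ → A)) (δ : ℕ → ℝ) (τ : List A → ℕ → A) (ξ η : ℕ → A) : ℝ≥0∞ :=
  ⨆ f : {f : (ℕ → A) → ℝ // ContinuousOn f Ξ ∧
      ∀ u₁ u₂, TildeH1 (language Ξ) u₁ u₂ → |f (τ u₁) - f (τ u₂)| ≤ δ (weeLenW u₁ u₂)},
    ENNReal.ofReal |f.1 ξ - f.1 η|

/-- `d_inf`. -/
def dInf (Ξ : Set (ℕ → A)) (δ : ℕ → ℝ) (ξ η : ℕ → A) : ℝ≥0∞ :=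
  ⨅ τ : {τ // IsChoiceFun Ξ τ}, dTau Ξ δ τ.1 ξ η

/-- `d_sup`. -/
def dSup (Ξ : Set (ℕ → A)) (δ : ℕ → ℝ) (ξ η : ℕ → A) : ℝ≥0∞ :=
  ⨆ τ : {τ // IsChoiceFun Ξ τ}, dTau Ξ δ τ.1 ξ η

/-- `d̃_inf`. -/
def dTilInf (Ξ : Set (ℕ → A)) (δ : ℕ → ℝ) (ξ η : ℕ → A) : ℝ≥0∞ :=
  ⨅ τ : {τ // IsChoiceFun Ξ τ}, dTilTau Ξ δ τ.1 ξ η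

/-- `d̃_sup`. -/
def dTilSup (Ξ : Set (ℕ → A)) (δ : ℕ → ℝ) (ξ η : ℕ → A) : ℝ≥0∞ :=
  ⨆ τ : {τ // IsChoiceFun Ξ τ}, dTilTau Ξ δ τ.1 ξ η

/-- `β̃_τ(ξ̃ₙ)`: equals `1` if the longest common privileged prefix of `τ(ξ̃ₙ)` and `ξ`
is `ξ̃ₙ`, and `0` otherwise. -/
def btil (τ : List A → ℕ → A) (ξ : ℕ → A) (n : ℕ) : ℝ≥0∞ :=
  if privPrefix (τ (privPrefix ξ n)) (weeInd (τ (privPrefix ξ n)) ξ) = privPrefix ξ n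
  then 1 else 0

/-! ### Zeta functions -/

/-- `ζ_k(s)` (with the convention `0⁰ = 0`). -/
def zeta (L : Set (List A)) (δ : ℕ → ℝ) (k : ℕ) (s : ℝ) : ℝ≥0∞ :=
  ∑' v : L, (if aext L (v : List A) = 0 then 0 else ((aext L (v : List A) : ℝ≥0∞)) ^ k) *
    ENNReal.ofReal (δ (v : List A).length ^ s)

/-- `ζ̃_k(s)` (with the convention `0⁰ = 0`). -/
def zetaTil (L : Set (List A)) (δ : ℕ → ℝ) (k : ℕ) (s : ℝ) : ℝ≥0∞ :=
  ∑' v : L, (if atil L (v : List A) = 0 then 0 else ((atil L (v : List A) : ℝ≥0∞)) ^ k) *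
    ENNReal.ofReal (δ (v : List A).length ^ s)

/-- Almost finite privileged rank. -/
def AlmostFiniteRank (L : Set (List A)) : Prop :=
  ∃ a b : ℝ, 0 < a ∧ 0 < b ∧ ∀ u, IsPrivileged u → u ∈ L → 2 ≤ u.length →
    (Nat.card {u' : List A // CFRin L u u'} : ℝ) ≤ a * (Real.log u.length) ^ b


set_option linter.unusedSectionVars false

lemma factorAt_iff (u : List A) (ξ : ℕ → A) (k : ℕ) :
    FactorAt u ξ k ↔ ∀ i, (h : i < u.length) → u[i] = ξ (k + i) := by
  constructor
  · intro h i hi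
    conv_lhs => rw [List.getElem_of_eq h hi]
    simp
  · intro h
    apply List.ext_getElem (by simp)
    intro i h1 h2
    simpa using h i h1

def cyl (v : List A) : Set (ℕ → A) := {ξ | PrefixOfInf v ξ}

lemma mem_cyl_iff (v : List A) (ξ : ℕ → A) :
    ξ ∈ cyl v ↔ ∀ i, (h : i < v.length) → v[i] = ξ i := by
  simp [cyl, PrefixOfInf, factorAt_iff]

lemma isClopen_cyl [TopologicalSpace A] [DiscreteTopology A] (v : List A) :
    IsClopen (cyl v) := by
  have : cyl v = ⋂ i : Fin v.length, (fun ξ : ℕ → A => ξ i.1) ⁻¹' {v[i.1]} := by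
    ext ξ
    simp [mem_cyl_iff, Fin.forall_iff, eq_comm]
  rw [this]
  exact isClopen_iInter_of_finite fun i =>
    (isClopen_discrete _).preimage (continuous_apply _)

lemma filter_len_two (n k : ℕ) (hk : 0 < k) (hkn : k < n) (p : ℕ → Bool)
    (h : ∀ j < n, p j = true ↔ (j = 0 ∨ j = k)) :
    ((List.range n).filter p).length = 2 := by
  have h1 : ((List.range n).filter p).length
      = ((Finset.range n).filter (fun j => p j = true)).card := by
    simp [Finset.filter, Finset.range, Multiset.range]
  rw [h1]
  have : (Finset.range n).filter (fun j => p j = true) = {0, k} := by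
    ext j
    simp only [Finset.mem_filter, Finset.mem_range, Finset.mem_insert, Finset.mem_singleton]
    constructor
    · rintro ⟨hj, hp⟩; exact (h j hj).mp hp
    · intro hj
      have hjn : j < n := by rcases hj with rfl | hkk <;> omega
      exact ⟨hjn, (h j hjn).mpr hj⟩
  rw [this, Finset.card_pair hk.ne]

/-- the length-`m` prefix of `ξ`. -/
def pw (ξ : ℕ → A) (m : ℕ) : List A := (List.range m).map ξ

@[simp] lemma pw_length (ξ : ℕ → A) (m : ℕ) : (pw ξ m).length = m := by simp [pw]

@[simp] lemma pw_getElem (ξ : ℕ → A) (m i : ℕ) (h : i < (pw ξ m).length) :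
    (pw ξ m)[i] = ξ i := by simp [pw]

lemma prefixOfInf_pw (ξ : ℕ → A) (m : ℕ) : PrefixOfInf (pw ξ m) ξ := by
  rw [show PrefixOfInf (pw ξ m) ξ ↔ _ from factorAt_iff _ _ _]
  intro i hi; simp

lemma shift_iter (ξ : ℕ → A) (m : ℕ) : shift^[m] ξ = fun i => ξ (i + m) := by
  induction m with
  | zero => simp
  | succ n ih =>
    rw [Function.iterate_succ_apply']
    funext i
    simp [shift, ih]
    ring_nf

lemma take_drop_pw (ξ : ℕ → A) (j L m : ℕ) (h : j + L ≤ m) :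
    ((pw ξ m).drop j).take L = (List.range L).map fun i => ξ (j + i) := by
  apply List.ext_getElem (by simp; omega)
  intro i h1 h2
  simp

lemma occCount_eq_two (v : List A) (hv : v ≠ []) (ξ : ℕ → A) (k : ℕ) (hk : 0 < k)
    (h0 : FactorAt v ξ 0) (hkocc : FactorAt v ξ k)
    (hm : ∀ j, 0 < j → j < k → ¬ FactorAt v ξ j) :
    occCount v (pw ξ (k + v.length)) = 2 := by
  set L := v.length with hL
  have hL0 : 0 < L := List.length_pos_iff.mpr hv
  unfold occCount
  rw [pw_length]
  apply filter_len_two _ _ hk (by omega)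
  intro j hj
  simp only [beq_iff_eq]
  constructor
  · intro hEq
    by_contra hcon
    push_neg at hcon
    obtain ⟨hj0, hjk⟩ := hcon
    rcases lt_or_ge j k with hlt | hle
    · -- j < k, j ≠ 0 : contradiction with minimality
      have : FactorAt v ξ j := by
        rw [take_drop_pw ξ j L _ (by omega)] at hEq
        exact hEq.symm
      exact hm j (Nat.pos_of_ne_zero hj0) hlt this
    · -- j > k : length mismatch
      have hjk' : k < j := lt_of_le_of_ne hle (Ne.symm hjk)
      have : (((pw ξ (k + L)).drop j).take L).length < L := by
        simp; omega
      rw [hEq] at this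
      omega
  · intro hj'
    rcases hj' with rfl | rfl
    · rw [take_drop_pw ξ 0 L _ (by omega)]
      exact h0.symm
    · rw [take_drop_pw ξ j L _ (by omega)]
      exact hkocc.symm

lemma exists_occ [DiscreteTopology A] {Ξ : Set (ℕ → A)} (hΞ : IsSubshift Ξ)
    (hmin : IsMinimal Ξ) {ξ : ℕ → A} (hξ : ξ ∈ Ξ) (v : List A)
    (h0 : FactorAt v ξ 0) : ∃ k, 0 < k ∧ FactorAt v ξ k := by
  have hη : shift ξ ∈ Ξ := hΞ.shift_mem ξ hξ
  have hcl : ξ ∈ closure (Set.range fun n => shift^[n] (shift ξ)) := hmin _ hη hξ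
  have hopen : IsOpen (cyl v) := (isClopen_cyl v).isOpen
  have hmem : ξ ∈ cyl v := h0
  obtain ⟨ζ, hζ1, hζ2⟩ := (mem_closure_iff.mp hcl) (cyl v) hopen hmem
  obtain ⟨n, rfl⟩ := hζ2
  refine ⟨n + 1, Nat.succ_pos n, ?_⟩
  rw [factorAt_iff]
  intro i hi
  have := (mem_cyl_iff v _).mp hζ1 i hi
  rw [this]
  show shift^[n] (shift ξ) i = _
  rw [← Function.iterate_succ_apply, shift_iter]
  show ξ (i + (n+1)) = ξ (n + 1 + i)
  congr 1
  omega

lemma priv_grow [DiscreteTopology A] {Ξ : Set (ℕ → A)} (hΞ : IsSubshift Ξ)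
    (hmin : IsMinimal Ξ) {ξ : ℕ → A} (hξ : ξ ∈ Ξ) (N : ℕ) :
    ∃ v : List A, IsPrivileged v ∧ FactorAt v ξ 0 ∧ N ≤ v.length := by
  induction N with
  | zero => exact ⟨[], ⟨0, PrivOrder.zero⟩, by simp [FactorAt], by simp⟩
  | succ N ih =>
    obtain ⟨v, ⟨m, hm⟩, h0, hlen⟩ := ih
    by_cases hv : v = []
    · subst hv
      refine ⟨[ξ 0], ⟨1, PrivOrder.succ PrivOrder.zero ?_⟩, ?_, ?_⟩
      · simp [IsCFR]
      · rw [factorAt_iff]; intro i hi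
        simp only [List.length_singleton] at hi
        interval_cases i <;> simp
      · simp at hlen ⊢; omega
    · -- occurrence at minimal positive position
      have hex := exists_occ hΞ hmin hξ v h0
      classical
      set k := Nat.find hex with hkdef
      obtain ⟨hkpos, hkocc⟩ := Nat.find_spec hex
      have hmin' : ∀ j, 0 < j → j < k → ¬ FactorAt v ξ j := by
        intro j hj0 hjk hcon
        exact Nat.find_min hex hjk ⟨hj0, hcon⟩
      set L := v.length with hL
      have hL0 : 0 < L := List.length_pos_iff.mpr hv
      refine ⟨pw ξ (k + L), ⟨m + 1, PrivOrder.succ hm ?_⟩, prefixOfInf_pw ξ _, by simp; omega⟩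
      rw [IsCFR, if_neg hv]
      have hpre : v = (pw ξ (k + L)).take L := by
        rw [show (pw ξ (k + L)).take L = ((pw ξ (k + L)).drop 0).take L by simp,
          take_drop_pw ξ 0 L _ (by omega)]
        exact h0
      have hsuf : v = (pw ξ (k + L)).drop k := by
        have : (pw ξ (k + L)).drop k = ((pw ξ (k + L)).drop k).take L := by
          rw [List.take_of_length_le]; simp
        rw [this, take_drop_pw ξ k L _ (by omega)]
        exact hkocc
      refine ⟨?_, ?_, occCount_eq_two v hv ξ k hkpos h0 hkocc hmin'⟩
      · rw [hpre]; exact List.take_prefix _ _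
      · rw [hsuf]; exact List.drop_suffix _ _

lemma mem_language_of_prefix {Ξ : Set (ℕ → A)} {ξ : ℕ → A} (hξ : ξ ∈ Ξ) {v : List A}
    (h : FactorAt v ξ 0) : v ∈ language Ξ := ⟨ξ, hξ, 0, h⟩


/-- For a minimal and aperiodic right-infinite subshift over a finite
alphabet, the cylinder sets of privileged words of the language form a basis of clopen
sets for the topology of `Ξ`. -/
theorem statement6 {A : Type*} [Fintype A] [DecidableEq A] [TopologicalSpace A]
    [DiscreteTopology A] (Ξ : Set (ℕ → A)) (hΞ : IsSubshift Ξ) (hmin : IsMinimal Ξ)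
    (hap : Aperiodic Ξ) :
    TopologicalSpace.IsTopologicalBasis
        {S : Set Ξ | ∃ v ∈ language Ξ, IsPrivileged v ∧ S = {x : Ξ | PrefixOfInf v x.1}} ∧
      ∀ v ∈ language Ξ, IsPrivileged v → IsClopen {x : Ξ | PrefixOfInf v x.1} := by
  have hclop : ∀ v : List A, IsClopen {x : Ξ | PrefixOfInf v x.1} := by
    intro v
    have : {x : Ξ | PrefixOfInf v x.1} = Subtype.val ⁻¹' cyl v := rfl
    rw [this]
    exact (isClopen_cyl v).preimage continuous_subtype_val
  refine ⟨?_, fun v _ _ => hclop v⟩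
  apply TopologicalSpace.isTopologicalBasis_of_isOpen_of_nhds
  · rintro S ⟨v, hvL, hvP, rfl⟩
    exact (hclop v).isOpen
  · intro x U hxU hU
    obtain ⟨V, hV, rfl⟩ := isOpen_induced_iff.mp hU
    have hxV : (x : ℕ → A) ∈ V := hxU
    have hVnhds : V ∈ nhds (x : ℕ → A) := hV.mem_nhds hxV
    rw [nhds_pi, Filter.mem_pi] at hVnhds
    obtain ⟨I, hIfin, t, ht, hsub⟩ := hVnhds
    obtain ⟨N, hN⟩ := hIfin.bddAbove
    obtain ⟨v, hvP, hv0, hvlen⟩ := priv_grow hΞ hmin x.2 (N + 1)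
    refine ⟨{y : Ξ | PrefixOfInf v y.1}, ⟨v, mem_language_of_prefix x.2 hv0, hvP, rfl⟩,
      hv0, ?_⟩
    intro y hy
    show (y : ℕ → A) ∈ V
    apply hsub
    intro i hi
    have hiN : i < v.length := lt_of_le_of_lt (hN hi) (by omega)
    have h1 : v[i] = (y : ℕ → A) i := by
      have := (factorAt_iff v y.1 0).mp hy i hiN
      simpa using this
    have h2 : v[i] = (x : ℕ → A) i := by
      have := (factorAt_iff v x.1 0).mp hv0 i hiN
      simpa using this
    rw [← h1, h2]
    exact mem_of_mem_nhds (ht i)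


end Arx1111
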